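/- Let n ≥ 2 be an integer, μ1 ∈ ℝ with n+μ1 > 1, δ ≥ 0, κ := (μ1−1−√δ)/2, and p_* := 1 + (n−√δ+2)/(n+μ1−1). If n − d_*(n+μ1) < √δ < n+2, then 1 + (2−√δ)/(n+κ+√δ) < p_*. -/
import Mathlib


/-- `d_*(ν)`: zero for `ν ≤ 1`, and `(−1−ν+√(ν²+10ν−7))/2` for `ν > 1`. -/
noncomputable def dStar (ν : ℝ) : ℝ :=
  if 1 < ν then (-1 - ν + Real.sqrt (ν ^ 2 + 10 * ν - 7)) / 2 else 0

/-- For integer `n ≥ 2`, `n+μ1 > 1` and `n − d_*(n+μ1) < √δ < n+2`, one has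
`1 + (2−√δ)/(n+κ+√δ) < p_*`. -/
theorem shift_exponent_lt_pStar (n : ℕ) (hn : 2 ≤ n) (μ1 δ : ℝ)
    (hnμ : 1 < (n : ℝ) + μ1) (hδ : 0 ≤ δ)
    (h1 : (n : ℝ) - dStar ((n : ℝ) + μ1) < Real.sqrt δ)
    (h2 : Real.sqrt δ < (n : ℝ) + 2) :
    1 + (2 - Real.sqrt δ) /
        ((n : ℝ) + (μ1 - 1 - Real.sqrt δ) / 2 + Real.sqrt δ) <
      1 + ((n : ℝ) - Real.sqrt δ + 2) / ((n : ℝ) + μ1 - 1) := by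
  set s := Real.sqrt δ with hsdef
  have hs : 0 ≤ s := Real.sqrt_nonneg δ
  set ν := (n : ℝ) + μ1 with hν
  have hn2 : (2 : ℝ) ≤ (n : ℝ) := by exact_mod_cast hn
  have harg : 0 ≤ ν ^ 2 + 10 * ν - 7 := by nlinarith
  set r := Real.sqrt (ν ^ 2 + 10 * ν - 7) with hrdef
  have hr : 0 ≤ r := Real.sqrt_nonneg _
  have hr2 : r ^ 2 = ν ^ 2 + 10 * ν - 7 := Real.sq_sqrt harg
  rw [dStar, if_pos hnμ] at h1
  have hA : 0 < (n : ℝ) + (μ1 - 1 - s) / 2 + s := by nlinarith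
  have hB : 0 < ν - 1 := by linarith
  have key : (2 - s) / ((n : ℝ) + (μ1 - 1 - s) / 2 + s)
      < ((n : ℝ) - s + 2) / (ν - 1) := by
    rw [div_lt_div_iff₀ hA hB]
    nlinarith [mul_nonneg (mul_nonneg hr hs) hs, sq_nonneg (s - (n:ℝ)),
      mul_pos (sub_pos.2 h1) (sub_pos.2 h2), mul_nonneg hr hs,
      mul_nonneg (sub_nonneg.2 hn2) hr]
  linarith
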